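/- (Closed form of I at s = 1) Let x ∈ ℂ∖Γ, z ∈ ℂ and y ∈ ℝ∖{0}. Then I(1, x, z, y) = π Σ_{γ∈Γ} χ(γ + x, z) |γ + x|^{−1} exp(−2π|y||γ + x|); in particular, for every a > 0 and y ≠ 0 one has ∫₀^∞ t^{−1/2} exp(−π²y²/t − t a²) dt = (√π / a) exp(−2π a |y|). -/

import Mathlib

noncomputable section

/-- The lattice Γ = ℤ + τℤ, as a map ℤ × ℤ → ℂ. -/
def lat (τ : ℂ) (p : ℤ × ℤ) : ℂ := (p.1 : ℂ) + (p.2 : ℂ) * τ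

/-- α = Im τ / π. -/
def alf (τ : ℂ) : ℝ := τ.im / Real.pi

/-- The character χ(γ, x) = exp(α⁻¹(γ·conj x − conj γ·x)). -/
def chi (τ γ x : ℂ) : ℂ :=
  Complex.exp (((alf τ)⁻¹ : ℝ) * (γ * (starRingEnd ℂ) x - (starRingEnd ℂ) γ * x))

/-- The heat-kernel series
I(s, x, z, y) = √π Σ_{γ∈Γ} χ(γ+x, z) ∫₀^∞ t^{s−3/2} exp(−π²y²/t − t|γ+x|²) dt. -/
def Iser (τ s x z : ℂ) (y : ℝ) : ℂ :=
  (Real.sqrt Real.pi : ℂ) * ∑' p : ℤ × ℤ, chi τ (lat τ p + x) z *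
    ∫ t in Set.Ioi (0 : ℝ), (t : ℂ) ^ (s - 3 / 2) *
      (Real.exp (-(Real.pi ^ 2 * y ^ 2) / t - t * (‖lat τ p + x‖) ^ 2) : ℂ)

section AuxGlasser
set_option maxHeartbeats 1000000
open MeasureTheory Set Real

-- derivative of φ u = a u - b / u
lemma phi_hasDeriv (a b : ℝ) {u : ℝ} (hu : u ≠ 0) :
    HasDerivAt (fun u : ℝ => a * u - b / u) (a + b / u ^ 2) u := by
  have h1 : HasDerivAt (fun u : ℝ => a * u) a u := by
    simpa using (hasDerivAt_id u).const_mul a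
  have h2 : HasDerivAt (fun u : ℝ => b / u) (-(b / u ^ 2)) u := by
    simpa [div_eq_mul_inv, neg_div] using (hasDerivAt_inv hu).const_mul b
  have h := h1.sub h2
  rw [sub_neg_eq_add] at h
  exact h

lemma phi_strictMono {a b : ℝ} (ha : 0 < a) (hb : 0 < b) :
    StrictMonoOn (fun u : ℝ => a * u - b / u) (Ioi (0:ℝ)) := by
  intro u hu v hv huv
  have hu0 : (0:ℝ) < u := hu
  have hv0 : (0:ℝ) < v := hv
  have h1 : a * u < a * v := by nlinarith
  have h2 : b / v < b / u := div_lt_div_of_pos_left hb hu0 huv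
  simp only
  linarith

lemma phi_image {a b : ℝ} (ha : 0 < a) (hb : 0 < b) :
    (fun u : ℝ => a * u - b / u) '' (Ioi (0:ℝ)) = Set.univ := by
  apply Set.eq_univ_of_forall
  intro v
  set s := Real.sqrt (v ^ 2 + 4 * a * b) with hs_def
  have hs2 : s ^ 2 = v ^ 2 + 4 * a * b := Real.sq_sqrt (by positivity)
  have hs0 : 0 ≤ s := Real.sqrt_nonneg _
  have hvs : 0 < v + s := by nlinarith
  refine ⟨(v + s) / (2 * a), show (0:ℝ) < _ by positivity, ?_⟩
  have h2a : (2 * a) ≠ 0 := by positivity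
  field_simp
  nlinarith [hvs]

lemma expPhi_integrable {a b : ℝ} (ha : 0 < a) (hb : 0 < b) :
    IntegrableOn (fun u : ℝ => Real.exp (-(a * u - b / u) ^ 2)) (Ioi (0:ℝ)) := by
  have hbound : Integrable (fun u : ℝ => Real.exp (2 * a * b) * Real.exp (-(a ^ 2) * u ^ 2)) :=
    (integrable_exp_neg_mul_sq (by positivity)).const_mul _
  apply (hbound.integrableOn).mono'
  · apply ContinuousOn.aestronglyMeasurable _ measurableSet_Ioi
    apply Real.continuous_exp.comp_continuousOn
    exact (((continuousOn_const.mul continuousOn_id).sub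
      (continuousOn_const.div continuousOn_id (fun u hu => ne_of_gt hu))).pow 2).neg
  · filter_upwards [self_mem_ae_restrict measurableSet_Ioi] with u hu
    have hu0 : (0:ℝ) < u := hu
    rw [Real.norm_eq_abs, Real.abs_exp, ← Real.exp_add]
    apply Real.exp_le_exp.2
    have key : (a * u - b / u) ^ 2 = a ^ 2 * u ^ 2 - 2 * a * b + (b / u) ^ 2 := by
      field_simp; ring
    nlinarith [sq_nonneg (b / u)]

lemma gauss_J {a b : ℝ} (ha : 0 < a) (hb : 0 < b) :
    ∫ u in Ioi (0:ℝ), Real.exp (-(a * u - b / u) ^ 2) = Real.sqrt Real.pi / (2 * a) := by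
  have hd : ∀ u ∈ Ioi (0:ℝ), HasDerivWithinAt (fun u : ℝ => a * u - b / u)
      (a + b / u ^ 2) (Ioi (0:ℝ)) u :=
    fun u hu => (phi_hasDeriv a b (ne_of_gt (show (0:ℝ) < u from hu))).hasDerivWithinAt
  have hinj : Set.InjOn (fun u : ℝ => a * u - b / u) (Ioi (0:ℝ)) := (phi_strictMono ha hb).injOn
  have hd2 : ∀ u ∈ Ioi (0:ℝ), HasDerivWithinAt (fun u : ℝ => b / (a * u))
      (-(b / (a * u ^ 2))) (Ioi (0:ℝ)) u := by
    intro u hu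
    have h := (hasDerivAt_inv (ne_of_gt (show (0:ℝ) < u from hu))).const_mul (b / a)
    have hfun : (fun u : ℝ => b / (a * u)) = fun y : ℝ => b / a * y⁻¹ := by
      funext y; rw [div_mul_eq_div_div, div_eq_mul_inv]
    have hval : -(b / (a * u ^ 2)) = b / a * -(u ^ 2)⁻¹ := by
      rw [div_mul_eq_div_div, div_eq_mul_inv, mul_neg]
    have : HasDerivAt (fun u : ℝ => b / (a * u)) (-(b / (a * u ^ 2))) u := by
      rw [hfun, hval]; exact h
    exact this.hasDerivWithinAt
  have hinj2 : Set.InjOn (fun u : ℝ => b / (a * u)) (Ioi (0:ℝ)) := by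
    intro u hu v hv h
    have hu0 : (0:ℝ) < u := hu
    have hv0 : (0:ℝ) < v := hv
    simp only at h
    rw [div_eq_div_iff (by positivity) (by positivity)] at h
    exact mul_left_cancel₀ (mul_ne_zero hb.ne' ha.ne') (by linarith [h] : b * a * u = b * a * v)
  have himg2 : (fun u : ℝ => b / (a * u)) '' (Ioi (0:ℝ)) = Ioi (0:ℝ) := by
    apply Set.Subset.antisymm
    · rintro w ⟨u, hu, rfl⟩
      have hu0 : (0:ℝ) < u := hu
      exact show (0:ℝ) < b / (a * u) by positivity
    · intro w hw
      have hw0 : (0:ℝ) < w := hw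
      refine ⟨b / (a * w), show (0:ℝ) < b / (a * w) by positivity, ?_⟩
      simp only
      field_simp
  have hK : (∫ u in Ioi (0:ℝ), Real.exp (-(a * u - b / u) ^ 2))
      = ∫ u in Ioi (0:ℝ), (b / (a * u ^ 2)) * Real.exp (-(a * u - b / u) ^ 2) := by
    calc (∫ u in Ioi (0:ℝ), Real.exp (-(a * u - b / u) ^ 2))
        = ∫ v in (fun u : ℝ => b / (a * u)) '' (Ioi (0:ℝ)),
            Real.exp (-(a * v - b / v) ^ 2) := by rw [himg2]
      _ = ∫ u in Ioi (0:ℝ), |(-(b / (a * u ^ 2)))| •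
            Real.exp (-(a * (b / (a * u)) - b / (b / (a * u))) ^ 2) :=
          integral_image_eq_integral_abs_deriv_smul measurableSet_Ioi hd2 hinj2 _
      _ = ∫ u in Ioi (0:ℝ), (b / (a * u ^ 2)) * Real.exp (-(a * u - b / u) ^ 2) := by
          apply setIntegral_congr_fun measurableSet_Ioi
          intro u hu
          have hu0 : (0:ℝ) < u := hu
          have h1 : a * (b / (a * u)) - b / (b / (a * u)) = -(a * u - b / u) := by
            field_simp; ring
          simp only [smul_eq_mul]
          rw [h1, neg_sq, abs_neg, abs_of_pos (by positivity)]
  have hKint : IntegrableOn (fun u => (b / (a * u ^ 2)) * Real.exp (-(a * u - b / u) ^ 2))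
      (Ioi (0:ℝ)) := by
    have h2 := (integrableOn_image_iff_integrableOn_abs_deriv_smul measurableSet_Ioi hd2 hinj2
      (fun v => Real.exp (-(a * v - b / v) ^ 2))).1 (by rw [himg2]; exact expPhi_integrable ha hb)
    apply h2.congr_fun _ measurableSet_Ioi
    intro u hu
    have hu0 : (0:ℝ) < u := hu
    have h1 : a * (b / (a * u)) - b / (b / (a * u)) = -(a * u - b / u) := by
      field_simp; ring
    simp only [smul_eq_mul, h1, neg_sq, abs_neg, abs_of_pos (show (0:ℝ) < b / (a * u ^ 2) by positivity)]
  have hmain : Real.sqrt Real.pi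
      = ∫ u in Ioi (0:ℝ), (a + b / u ^ 2) * Real.exp (-(a * u - b / u) ^ 2) := by
    calc Real.sqrt Real.pi = ∫ v : ℝ, Real.exp (-v ^ 2) := by
          simpa using (integral_gaussian 1).symm
      _ = ∫ v in (fun u : ℝ => a * u - b / u) '' (Ioi (0:ℝ)), Real.exp (-v ^ 2) := by
          rw [phi_image ha hb, setIntegral_univ]
      _ = ∫ u in Ioi (0:ℝ), |a + b / u ^ 2| • Real.exp (-(a * u - b / u) ^ 2) :=
          integral_image_eq_integral_abs_deriv_smul measurableSet_Ioi hd hinj _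
      _ = ∫ u in Ioi (0:ℝ), (a + b / u ^ 2) * Real.exp (-(a * u - b / u) ^ 2) := by
          apply setIntegral_congr_fun measurableSet_Ioi
          intro u hu
          have hu0 : (0:ℝ) < u := hu
          simp only [smul_eq_mul]
          rw [abs_of_pos (show (0:ℝ) < a + b / u ^ 2 by positivity)]
  have hsplit : (∫ u in Ioi (0:ℝ), (a + b / u ^ 2) * Real.exp (-(a * u - b / u) ^ 2))
      = a * (∫ u in Ioi (0:ℝ), Real.exp (-(a * u - b / u) ^ 2))
        + a * (∫ u in Ioi (0:ℝ), Real.exp (-(a * u - b / u) ^ 2)) := by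
    have h1 : IntegrableOn (fun u => a * Real.exp (-(a * u - b / u) ^ 2)) (Ioi (0:ℝ)) :=
      (expPhi_integrable ha hb).const_mul a
    have heq : Set.EqOn (fun u : ℝ => (a + b / u ^ 2) * Real.exp (-(a * u - b / u) ^ 2))
        (fun u : ℝ => a * Real.exp (-(a * u - b / u) ^ 2)
          + a * ((b / (a * u ^ 2)) * Real.exp (-(a * u - b / u) ^ 2))) (Ioi (0:ℝ)) := by
      intro u hu
      have hu0 : (0:ℝ) < u := hu
      simp only
      field_simp
    rw [setIntegral_congr_fun measurableSet_Ioi heq,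
      integral_add h1 (hKint.const_mul a), integral_const_mul, integral_const_mul, ← hK]
  have hfin : Real.sqrt Real.pi
      = 2 * a * (∫ u in Ioi (0:ℝ), Real.exp (-(a * u - b / u) ^ 2)) := by
    rw [hmain, hsplit]; ring
  rw [eq_div_iff (by positivity)]
  linarith [hfin]

lemma glasser {a b : ℝ} (ha : 0 < a) (hb : 0 < b) :
    ∫ u in Ioi (0:ℝ), Real.exp (-(a ^ 2 * u ^ 2 + b ^ 2 / u ^ 2))
      = Real.sqrt Real.pi / (2 * a) * Real.exp (-(2 * a * b)) := by
  calc (∫ u in Ioi (0:ℝ), Real.exp (-(a ^ 2 * u ^ 2 + b ^ 2 / u ^ 2)))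
      = ∫ u in Ioi (0:ℝ), Real.exp (-(2 * a * b)) * Real.exp (-(a * u - b / u) ^ 2) := by
        apply setIntegral_congr_fun measurableSet_Ioi
        intro u hu
        have hu0 : (0:ℝ) < u := hu
        simp only
        rw [← Real.exp_add]
        congr 1
        field_simp
        ring
    _ = Real.exp (-(2 * a * b)) * (Real.sqrt Real.pi / (2 * a)) := by
        rw [integral_const_mul, gauss_J ha hb]
    _ = Real.sqrt Real.pi / (2 * a) * Real.exp (-(2 * a * b)) := by ring

lemma key_integral {a c : ℝ} (ha : 0 < a) (hc : 0 < c) :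
    (∫ t in Ioi (0:ℝ), t ^ (-(1 / 2) : ℝ) * Real.exp (-(c ^ 2) / t - t * a ^ 2))
      = Real.sqrt Real.pi / a * Real.exp (-(2 * a * c)) := by
  have hd3 : ∀ u ∈ Ioi (0:ℝ), HasDerivWithinAt (fun u : ℝ => u ^ 2) (2 * u) (Ioi (0:ℝ)) u := by
    intro u hu
    simpa using (hasDerivAt_pow 2 u).hasDerivWithinAt
  have hinj3 : Set.InjOn (fun u : ℝ => u ^ 2) (Ioi (0:ℝ)) := by
    intro u hu v hv h
    have hu0 : (0:ℝ) < u := hu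
    have hv0 : (0:ℝ) < v := hv
    simp only at h
    nlinarith [sq_nonneg (u - v), sq_nonneg (u + v)]
  have himg3 : (fun u : ℝ => u ^ 2) '' (Ioi (0:ℝ)) = Ioi (0:ℝ) := by
    apply Set.Subset.antisymm
    · rintro w ⟨u, hu, rfl⟩
      have hu0 : (0:ℝ) < u := hu
      exact show (0:ℝ) < u ^ 2 by positivity
    · intro w hw
      have hw0 : (0:ℝ) < w := hw
      exact ⟨Real.sqrt w, Real.sqrt_pos.2 hw0, Real.sq_sqrt hw0.le⟩
  calc (∫ t in Ioi (0:ℝ), t ^ (-(1 / 2) : ℝ) * Real.exp (-(c ^ 2) / t - t * a ^ 2))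
      = ∫ t in (fun u : ℝ => u ^ 2) '' (Ioi (0:ℝ)),
          t ^ (-(1 / 2) : ℝ) * Real.exp (-(c ^ 2) / t - t * a ^ 2) := by rw [himg3]
    _ = ∫ u in Ioi (0:ℝ), |2 * u| • ((u ^ 2) ^ (-(1 / 2) : ℝ)
          * Real.exp (-(c ^ 2) / u ^ 2 - u ^ 2 * a ^ 2)) :=
        integral_image_eq_integral_abs_deriv_smul measurableSet_Ioi hd3 hinj3 _
    _ = ∫ u in Ioi (0:ℝ), 2 * Real.exp (-(a ^ 2 * u ^ 2 + c ^ 2 / u ^ 2)) := by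
        apply setIntegral_congr_fun measurableSet_Ioi
        intro u hu
        have hu0 : (0:ℝ) < u := hu
        have hpow : (u ^ 2 : ℝ) ^ (-(1 / 2) : ℝ) = u⁻¹ := by
          rw [← Real.rpow_natCast u 2, ← Real.rpow_mul hu0.le]
          norm_num [Real.rpow_neg_one]
        have hexp : -(c ^ 2) / u ^ 2 - u ^ 2 * a ^ 2 = -(a ^ 2 * u ^ 2 + c ^ 2 / u ^ 2) := by
          ring
        simp only [smul_eq_mul, hpow, hexp, abs_of_pos (show (0:ℝ) < 2 * u by positivity)]
        field_simp
    _ = 2 * (Real.sqrt Real.pi / (2 * a) * Real.exp (-(2 * a * c))) := by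
        rw [integral_const_mul, glasser ha hc]
    _ = Real.sqrt Real.pi / a * Real.exp (-(2 * a * c)) := by
        field_simp

end AuxGlasser

/-- Closed form of I at s = 1:
I(1, x, z, y) = π Σ_{γ∈Γ} χ(γ+x, z) |γ+x|⁻¹ exp(−2π|y||γ+x|); in particular
∫₀^∞ t^{−1/2} exp(−π²y²/t − ta²) dt = (√π/a) exp(−2πa|y|) for every a > 0. -/
theorem Iser_at_one (τ : ℂ) (hτ : 0 < τ.im) (x z : ℂ)
    (hx : x ∉ Set.range (lat τ)) (y : ℝ) (hy : y ≠ 0) :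
    Iser τ 1 x z y = (Real.pi : ℂ) * ∑' p : ℤ × ℤ, chi τ (lat τ p + x) z *
        ((‖lat τ p + x‖ : ℝ) : ℂ)⁻¹ *
        (Real.exp (-2 * Real.pi * |y| * ‖lat τ p + x‖) : ℂ) ∧
    ∀ a : ℝ, 0 < a →
      (∫ t in Set.Ioi (0 : ℝ), t ^ (-(1 / 2) : ℝ) *
          Real.exp (-(Real.pi ^ 2 * y ^ 2) / t - t * a ^ 2)) =
        (Real.sqrt Real.pi / a) * Real.exp (-2 * Real.pi * a * |y|) := by
  have hy0 : 0 < |y| := abs_pos.2 hy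
  have key : ∀ a : ℝ, 0 < a →
      (∫ t in Set.Ioi (0 : ℝ), t ^ (-(1 / 2) : ℝ) *
          Real.exp (-(Real.pi ^ 2 * y ^ 2) / t - t * a ^ 2)) =
        Real.sqrt Real.pi / a * Real.exp (-2 * Real.pi * a * |y|) := by
    intro a ha
    have hc : 0 < Real.pi * |y| := by positivity
    have h := key_integral ha hc
    rw [show ((Real.pi * |y|) ^ 2 : ℝ) = Real.pi ^ 2 * y ^ 2 by rw [mul_pow, sq_abs]] at h
    rw [h, show -(2 * a * (Real.pi * |y|)) = -2 * Real.pi * a * |y| by ring]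
  refine ⟨?_, key⟩
  have hr : ∀ p : ℤ × ℤ, 0 < ‖lat τ p + x‖ := by
    intro p
    have hne : lat τ p + x ≠ 0 := by
      intro h0
      apply hx
      refine ⟨(-p.1, -p.2), ?_⟩
      simp only [lat] at h0 ⊢
      push_cast
      linear_combination -h0
    exact norm_pos_iff.mpr hne
  have hterm : ∀ p : ℤ × ℤ,
      (∫ t in Set.Ioi (0 : ℝ), (t : ℂ) ^ ((1 : ℂ) - 3 / 2) *
          (Real.exp (-(Real.pi ^ 2 * y ^ 2) / t - t * (‖lat τ p + x‖) ^ 2) : ℂ))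
        = (((Real.sqrt Real.pi / ‖lat τ p + x‖) *
            Real.exp (-2 * Real.pi * ‖lat τ p + x‖ * |y|) : ℝ) : ℂ) := by
    intro p
    calc (∫ t in Set.Ioi (0 : ℝ), (t : ℂ) ^ ((1 : ℂ) - 3 / 2) *
          (Real.exp (-(Real.pi ^ 2 * y ^ 2) / t - t * (‖lat τ p + x‖) ^ 2) : ℂ))
        = ∫ t in Set.Ioi (0 : ℝ), ((t ^ (-(1 / 2) : ℝ) *
            Real.exp (-(Real.pi ^ 2 * y ^ 2) / t - t * (‖lat τ p + x‖) ^ 2) : ℝ) : ℂ) := by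
          apply MeasureTheory.setIntegral_congr_fun measurableSet_Ioi
          intro t ht
          have ht0 : (0:ℝ) < t := ht
          simp only
          rw [show ((1 : ℂ) - 3 / 2) = ((-(1 / 2) : ℝ) : ℂ) by norm_num,
            ← Complex.ofReal_cpow ht0.le]
          push_cast
          ring
      _ = (((∫ t in Set.Ioi (0 : ℝ), t ^ (-(1 / 2) : ℝ) *
            Real.exp (-(Real.pi ^ 2 * y ^ 2) / t - t * (‖lat τ p + x‖) ^ 2)) : ℝ) : ℂ) :=
          integral_ofReal
      _ = _ := by rw [key _ (hr p)]
  unfold Iser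
  rw [← tsum_mul_left, ← tsum_mul_left]
  apply tsum_congr
  intro p
  rw [hterm p]
  have hππ : (Real.sqrt Real.pi : ℂ) * (Real.sqrt Real.pi : ℂ) = (Real.pi : ℂ) := by
    norm_cast
    exact Real.mul_self_sqrt Real.pi_pos.le
  have hrne : ((‖lat τ p + x‖ : ℝ) : ℂ) ≠ 0 := by
    exact_mod_cast (hr p).ne'
  push_cast
  rw [show (-2 * (Real.pi : ℂ) * ((‖lat τ p + x‖ : ℝ) : ℂ) * ((|y| : ℝ) : ℂ))
    = (-2 * (Real.pi : ℂ) * ((|y| : ℝ) : ℂ) * ((‖lat τ p + x‖ : ℝ) : ℂ)) by ring]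
  rw [← hππ]
  ring
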